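/- Let (Ω, F, P) be a probability space and for each n = 1,...,N let A^(n) : Ω → ℝ^{I_n × R} be a random matrix with rows a^(n)_{i_n} : Ω → ℝ^R. Assume that the collection of all row vectors {a^(n)_{i_n} : n = 1,...,N, i_n = 1,...,I_n} is mutually independent and that every entry of every A^(n) is square-integrable. Then E[(⊙_n A^(n))^T (⊙_n A^(n))] = Σ_{i_1=1}^{I_1} ··· Σ_{i_N=1}^{I_N} ⊛_n E[a^(n)_{i_n} a^(n)T_{i_n}], where the expectation of a random matrix is taken entrywise. -/

import Mathlib

open scoped BigOperators Matrix
open Finset Matrix MeasureTheory ProbabilityTheory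

/-- Khatri-Rao product (in reverse order): row indexed by a multi-index. -/
def khatriRao {ι : Type*} [Fintype ι] {I : ι → ℕ} {κ : Type*}
    (A : (n : ι) → Matrix (Fin (I n)) κ ℝ) :
    Matrix ((n : ι) → Fin (I n)) κ ℝ :=
  fun i k => ∏ n, A n (i n) k

/-- Reindexing an independent family along an injective map. -/
lemma iIndepFun_reindex {ι ι' Ω : Type*} [MeasurableSpace Ω] {μ : Measure Ω}
    {β : ι → Type*} [m : ∀ i, MeasurableSpace (β i)] {f : ∀ i, Ω → β i}
    (h : iIndepFun f μ) (e : ι' → ι) (he : Function.Injective e) :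
    iIndepFun (m := fun j => m (e j)) (fun j => f (e j)) μ := by
  classical
  rw [iIndepFun_iff_measure_inter_preimage_eq_mul] at h ⊢
  intro S sets hsets
  let sets' : ∀ i, Set (β i) := fun i =>
    if hji : ∃ j, e j = i then (hji.choose_spec ▸ sets hji.choose) else Set.univ
  have key : ∀ j, sets' (e j) = sets j := by
    intro j
    have h1 : ∃ j', e j' = e j := ⟨j, rfl⟩
    simp only [sets', dif_pos h1]
    have hj : h1.choose = j := he h1.choose_spec
    have aux : ∀ (a b : ι') (_ : a = b) (h : e a = e b),
        (h ▸ sets a : Set (β (e b))) = sets b := by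
      rintro a b rfl h
      rw [Subsingleton.elim h rfl]
    exact aux _ _ hj _
  have := h (S.image e) (sets := sets') (by
    intro i hi
    simp only [Finset.mem_image] at hi
    obtain ⟨j, hjS, rfl⟩ := hi
    rw [key j]
    exact hsets j hjS)
  rw [Finset.prod_image (fun a _ b _ hab => he hab)] at this
  have hInter : (⋂ i ∈ S.image e, f i ⁻¹' sets' i)
      = ⋂ j ∈ S, (fun ω => f (e j) ω) ⁻¹' sets j := by
    ext ω
    simp only [Set.mem_iInter, Finset.mem_image]
    constructor
    · intro hω j hj
      have := hω (e j) ⟨j, hj, rfl⟩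
      rwa [key j] at this
    · rintro hω i ⟨j, hj, rfl⟩
      rw [key j]
      exact hω j hj
  rw [hInter] at this
  rw [this]
  refine Finset.prod_congr rfl fun j hj => by rw [key j]

/-- Integral of a finite product of independent integrable real functions. -/
lemma integrable_and_integral_prod {ι Ω : Type*} [MeasurableSpace Ω] {μ : Measure Ω}
    [IsProbabilityMeasure μ]
    (g : ι → Ω → ℝ) (hindep : iIndepFun g μ)
    (hmeas : ∀ i, Measurable (g i)) (hint : ∀ i, Integrable (g i) μ) (s : Finset ι) :
    Integrable (fun ω => ∏ i ∈ s, g i ω) μ ∧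
      ∫ ω, ∏ i ∈ s, g i ω ∂μ = ∏ i ∈ s, ∫ ω, g i ω ∂μ := by
  classical
  induction s using Finset.cons_induction with
  | empty => simp
  | cons a s ha ih =>
    have hind : IndepFun (fun ω => ∏ i ∈ s, g i ω) (g a) μ := by
      have h := hindep.indepFun_finsetProd_of_notMem hmeas ha
      have : (∏ j ∈ s, g j) = fun ω => ∏ i ∈ s, g i ω := by
        funext ω; simp [Finset.prod_apply]
      rwa [this] at h
    have hIntProd : Integrable (fun ω => g a ω * ∏ i ∈ s, g i ω) μ :=
      hind.symm.integrable_mul (hint a) ih.1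
    constructor
    · have heq : (fun ω => ∏ i ∈ Finset.cons a s ha, g i ω)
          = fun ω => g a ω * ∏ i ∈ s, g i ω := by
        funext ω; rw [Finset.prod_cons]
      rw [heq]; exact hIntProd
    · have := hind.symm.integral_mul_eq_mul_integral (hint a).aestronglyMeasurable ih.1.aestronglyMeasurable
      simp only [Finset.prod_cons]
      calc ∫ ω, g a ω * ∏ i ∈ s, g i ω ∂μ
          = ∫ ω, (g a * fun ω => ∏ i ∈ s, g i ω) ω ∂μ := by rfl
        _ = (∫ ω, g a ω ∂μ) * ∫ ω, ∏ i ∈ s, g i ω ∂μ := this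
        _ = (∫ ω, g a ω ∂μ) * ∏ i ∈ s, ∫ ω, g i ω ∂μ := by rw [ih.2]

theorem stmt1 {N R : ℕ} {I : Fin N → ℕ}
    {Ω : Type*} [MeasurableSpace Ω] (P : Measure Ω) [IsProbabilityMeasure P]
    (A : (n : Fin N) → Ω → Matrix (Fin (I n)) (Fin R) ℝ)
    (hmeas : ∀ n (i : Fin (I n)), Measurable (fun ω => A n ω i))
    (hindep : iIndepFun
      (fun p : Σ n : Fin N, Fin (I n) => fun ω => A p.1 ω p.2) P)
    (hL2 : ∀ n (i : Fin (I n)) (r : Fin R), MemLp (fun ω => A n ω i r) 2 P) :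
    ∀ r s : Fin R,
      (∫ ω, ((khatriRao (fun n => A n ω))ᵀ * khatriRao (fun n => A n ω)) r s ∂P)
        = ∑ i : (n : Fin N) → Fin (I n),
            ∏ n, ∫ ω, A n ω (i n) r * A n ω (i n) s ∂P := by
  intro r s
  classical
  -- the family of products, for a fixed multi-index i
  have hg : ∀ i : (n : Fin N) → Fin (I n),
      Integrable (fun ω => ∏ n, A n ω (i n) r * A n ω (i n) s) P ∧
      ∫ ω, ∏ n, A n ω (i n) r * A n ω (i n) s ∂P
        = ∏ n, ∫ ω, A n ω (i n) r * A n ω (i n) s ∂P := by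
    intro i
    set g : Fin N → Ω → ℝ := fun n ω => A n ω (i n) r * A n ω (i n) s with hgdef
    have hgind : iIndepFun g P := by
      have h1 := iIndepFun_reindex hindep (fun n : Fin N => (⟨n, i n⟩ : Σ n, Fin (I n)))
        (fun a b hab => by injection hab)
      have h2 := h1.comp (fun _ (v : Fin R → ℝ) => v r * v s)
        (fun _ => ((measurable_pi_apply r).mul (measurable_pi_apply s)))
      exact h2
    have hgmeas : ∀ n, Measurable (g n) := fun n =>
      ((hmeas n (i n)).eval.mul ((hmeas n (i n)).eval))
    have hgint : ∀ n, Integrable (g n) P := by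
      intro n
      have h1 := (hL2 n (i n) r).integrable_sq
      have h2 := (hL2 n (i n) s).integrable_sq
      refine Integrable.mono' ((h1.add h2).div_const 2)
        (hgmeas n).aestronglyMeasurable (ae_of_all _ fun ω => ?_)
      simp only [g, Real.norm_eq_abs, abs_mul, Pi.add_apply]
      nlinarith [sq_nonneg (|A n ω (i n) r| - |A n ω (i n) s|),
        sq_abs (A n ω (i n) r), sq_abs (A n ω (i n) s)]
    simpa [g] using integrable_and_integral_prod g hgind hgmeas hgint Finset.univ
  have hentry : ∀ ω, ((khatriRao (fun n => A n ω))ᵀ * khatriRao (fun n => A n ω)) r s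
      = ∑ i : (n : Fin N) → Fin (I n), ∏ n, A n ω (i n) r * A n ω (i n) s := by
    intro ω
    rw [Matrix.mul_apply]
    refine Finset.sum_congr rfl fun i _ => ?_
    rw [Matrix.transpose_apply]
    simp only [khatriRao]
    rw [← Finset.prod_mul_distrib]
  calc (∫ ω, ((khatriRao (fun n => A n ω))ᵀ * khatriRao (fun n => A n ω)) r s ∂P)
      = ∫ ω, ∑ i : (n : Fin N) → Fin (I n), ∏ n, A n ω (i n) r * A n ω (i n) s ∂P := by
        simp_rw [hentry]
    _ = ∑ i : (n : Fin N) → Fin (I n), ∫ ω, ∏ n, A n ω (i n) r * A n ω (i n) s ∂P := by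
        rw [integral_finset_sum]
        exact fun i _ => (hg i).1
    _ = ∑ i : (n : Fin N) → Fin (I n), ∏ n, ∫ ω, A n ω (i n) r * A n ω (i n) s ∂P := by
        exact Finset.sum_congr rfl fun i _ => (hg i).2
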